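/- For integers 0 ≤ t ≤ k ≤ n with t + k ≤ n, one has Σ_{j=0}^{t} min{C(n,t)C(t,j), C(n,k)C(k,j)} = Σ_{j=0}^{t} C(n,t)C(t,j) = 2^t·C(n,t); i.e., the rank formula of the (t,k)-incidence matrix of H^n gives full rank equal to dim M^n_t when t + k ≤ n. -/

import Mathlib

lemma choose_mono_half (m a c : ℕ) (hac : a ≤ c) (hc : c ≤ m / 2) :
    m.choose a ≤ m.choose c := by
  induction hac using Nat.decreasingInduction with
  | self => rfl
  | of_succ k hk ih =>
      exact (Nat.choose_le_succ_of_lt_half_left (lt_of_lt_of_le hk hc)).trans ih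

lemma choose_le_choose_right (m a b : ℕ) (hab : a ≤ b) (h : a + b ≤ m) :
    m.choose a ≤ m.choose b := by
  rcases le_or_gt b (m / 2) with hb | hb
  · exact choose_mono_half m a b hab hb
  · rw [← Nat.choose_symm (by omega : b ≤ m)]
    exact choose_mono_half m a (m - b) (by omega) (by omega)

theorem stmt_16 (n t k : ℕ) (htk : t ≤ k) (hkn : k ≤ n) (htkn : t + k ≤ n) :
    (∑ j ∈ Finset.range (t + 1),
        min (n.choose t * t.choose j) (n.choose k * k.choose j))
      = ∑ j ∈ Finset.range (t + 1), n.choose t * t.choose j ∧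
    (∑ j ∈ Finset.range (t + 1),
        min (n.choose t * t.choose j) (n.choose k * k.choose j))
      = 2 ^ t * n.choose t := by
  have key : ∀ j ∈ Finset.range (t + 1),
      min (n.choose t * t.choose j) (n.choose k * k.choose j)
        = n.choose t * t.choose j := by
    intro j hj
    rw [Finset.mem_range] at hj
    have hjt : j ≤ t := by omega
    apply min_eq_left
    rw [Nat.choose_mul hjt,
        Nat.choose_mul (le_trans hjt htk)]
    exact Nat.mul_le_mul_left _
      (choose_le_choose_right (n - j) (t - j) (k - j) (by omega) (by omega))
  have h1 := Finset.sum_congr rfl key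
  refine ⟨h1, h1.trans ?_⟩
  rw [← Finset.mul_sum, Nat.sum_range_choose, Nat.mul_comm]
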